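/- Let 0<x<1 be real and r∈ℂ with Re(r)>1; set r* := r−1 (so Re(r*)>0). Then for every complex w with |w|<1 and |x^{−2}w|<1 the series ∑_{m=1}^∞ (1/m)·( (x^{rm}−x^{−rm})(x^m+x^{−m}) / (x^{r*m}−x^{−r*m}) )·w^m converges absolutely and exp( − ∑_{m=1}^∞ (1/m)·( (x^{rm}−x^{−rm})(x^m+x^{−m}) / (x^{r*m}−x^{−r*m}) )·w^m ) = (1−w) · (x^{−2}w;x^{2r*})_∞ / (x^{2r*+2}w;x^{2r*})_∞. -/

import Mathlib

open Complex

/-- `x^w := exp(w · log x)` for real `x` and complex `w`. -/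
noncomputable def xpow (x : ℝ) (w : ℂ) : ℂ := Complex.exp (w * (Real.log x : ℂ))

/-- The infinite `q`-Pochhammer product `(z;q)_∞ = ∏_{j=0}^∞ (1 − q^j z)`. -/
noncomputable def qPoch (z q : ℂ) : ℂ := ∏' j : ℕ, (1 - q ^ j * z)

/-- `Θ_q(z) = (z;q)_∞ (q z⁻¹;q)_∞ (q;q)_∞`. -/
noncomputable def jacTheta0 (q z : ℂ) : ℂ := qPoch z q * qPoch (q * z⁻¹) q * qPoch q q

/-- The Jacobi theta function `[u]_r = x^{u²/r − u} Θ_{x^{2r}}(x^{2u}) / ((x^{2r};x^{2r})_∞)³`. -/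
noncomputable def jTheta (x : ℝ) (r u : ℂ) : ℂ :=
  xpow x (u ^ 2 / r - u) * jacTheta0 (xpow x (2 * r)) (xpow x (2 * u)) /
    (qPoch (xpow x (2 * r)) (xpow x (2 * r))) ^ 3

/-- `m`-th term of the `E_j E_j` contraction series (with `r* = r − 1`). -/
noncomputable def EEterm (x : ℝ) (r w : ℂ) (m : ℕ) : ℂ :=
  (1 / (m : ℂ)) * ((xpow x (r * m) - xpow x (-r * m)) *
      (xpow x m + xpow x (-m)) / (xpow x ((r - 1) * m) - xpow x (-(r - 1) * m))) * w ^ m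

lemma xpow_norm (x : ℝ) (c : ℂ) :
    ‖xpow x c‖ = Real.exp (c.re * Real.log x) := by
  rw [xpow, Complex.norm_exp]
  congr 1
  simp [Complex.mul_re]

lemma xpow_add (x : ℝ) (c d : ℂ) : xpow x (c + d) = xpow x c * xpow x d := by
  simp [xpow, add_mul, Complex.exp_add]

lemma xpow_neg (x : ℝ) (c : ℂ) : xpow x (-c) = (xpow x c)⁻¹ := by
  simp [xpow, neg_mul, Complex.exp_neg]

lemma xpow_natmul (x : ℝ) (c : ℂ) (m : ℕ) : xpow x (c * m) = (xpow x c) ^ m := by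
  rw [xpow, xpow,
    show c * (m : ℂ) * ((Real.log x : ℝ) : ℂ) = (m : ℕ) * (c * (Real.log x : ℂ)) by ring,
    Complex.exp_nat_mul]

lemma xpow_nat (x : ℝ) (m : ℕ) : xpow x m = (xpow x 1) ^ m := by
  rw [← xpow_natmul, one_mul]

lemma xpow_ne_zero (x : ℝ) (c : ℂ) : xpow x c ≠ 0 := Complex.exp_ne_zero _

lemma ratio_eq (P Q W N d : ℂ) (hP : P ≠ 0) (hQ : Q ≠ 0) (hd : d ≠ 0)
    (hd2 : d * (Q * Q) = Q * Q - P * P) :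
    1 / N * ((P - P⁻¹) * (Q + Q⁻¹) / (P * Q⁻¹ - P⁻¹ * Q)) * W =
      W / N + (Q⁻¹ * Q⁻¹ * W - P * P * W) * d⁻¹ / N := by
  have hD1 : P * Q⁻¹ - P⁻¹ * Q = -(Q * P⁻¹) * d := by
    field_simp
    linear_combination hd2
  have hQP : -(Q * P⁻¹) * d ≠ 0 := by simp [hQ, hP, hd]
  have main : (P - P⁻¹) * (Q + Q⁻¹) / (-(Q * P⁻¹) * d) * W
      = W + (Q⁻¹ * Q⁻¹ * W - P * P * W) * d⁻¹ := by
    rw [div_mul_eq_mul_div, div_eq_iff hQP]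
    field_simp
    linear_combination W * hd2
  rw [hD1, mul_assoc, main]
  ring

lemma one_sub_ne (z : ℂ) (hz : ‖z‖ < 1) : (1 : ℂ) - z ≠ 0 := by
  intro hc
  rw [sub_eq_zero] at hc
  rw [← hc] at hz
  simp at hz

/-- shifted Taylor series of `-log(1-z)` -/
lemma htaylor (z : ℂ) (hz : ‖z‖ < 1) :
    HasSum (fun m : ℕ => z ^ (m + 1) / ((m + 1 : ℕ) : ℂ)) (-Complex.log (1 - z)) := by
  have h := Complex.hasSum_taylorSeries_neg_log hz
  have h2 := (hasSum_nat_add_iff' (f := fun n : ℕ => z ^ n / (n : ℂ)) 1).mpr h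
  simpa using h2

set_option maxHeartbeats 2000000 in
theorem stmt19 (x : ℝ) (hx0 : 0 < x) (hx1 : x < 1) (r : ℂ) (hr : 1 < r.re)
    (w : ℂ) (hw : ‖w‖ < 1) (hw' : ‖xpow x (-2) * w‖ < 1) :
    Summable (fun m : ℕ => ‖EEterm x r w (m + 1)‖) ∧
    Complex.exp (-∑' m : ℕ, EEterm x r w (m + 1)) =
      (1 - w) * qPoch (xpow x (-2) * w) (xpow x (2 * (r - 1))) /
        qPoch (xpow x (2 * (r - 1) + 2) * w) (xpow x (2 * (r - 1))) := by
  have hlx : Real.log x < 0 := Real.log_neg hx0 hx1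
  set q : ℂ := xpow x (2 * (r - 1)) with hqdef
  set aa : ℂ := xpow x (-2) * w with hadef
  set bb : ℂ := xpow x (2 * (r - 1) + 2) * w with hbdef
  have hq : ‖q‖ < 1 := by
    rw [hqdef, xpow_norm, Real.exp_lt_one_iff]
    have h2 : (2 * (r - 1)).re = 2 * r.re - 2 := by
      simp [Complex.mul_re, Complex.sub_re]; ring
    rw [h2]; nlinarith
  have ha : ‖aa‖ < 1 := hw'
  have hxp2 : ‖xpow x (2 * (r - 1) + 2)‖ < 1 := by
    rw [xpow_norm, Real.exp_lt_one_iff]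
    have h2 : (2 * (r - 1) + 2).re = 2 * r.re := by
      simp [Complex.add_re, Complex.mul_re, Complex.sub_re]; ring
    rw [h2]; nlinarith
  have hb : ‖bb‖ < 1 := by
    rw [hbdef, norm_mul]
    nlinarith [norm_nonneg w, norm_nonneg (xpow x (2 * (r - 1) + 2))]
  have hqk1 : ∀ k : ℕ, ‖q ^ k‖ ≤ 1 := fun k => by
    rw [norm_pow]; exact pow_le_one₀ (norm_nonneg q) hq.le
  have haq : ∀ k : ℕ, ‖aa * q ^ k‖ < 1 := fun k => by
    rw [norm_mul]
    exact lt_of_le_of_lt (mul_le_of_le_one_right (norm_nonneg aa) (hqk1 k)) ha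
  have hbq : ∀ k : ℕ, ‖bb * q ^ k‖ < 1 := fun k => by
    rw [norm_mul]
    exact lt_of_le_of_lt (mul_le_of_le_one_right (norm_nonneg bb) (hqk1 k)) hb
  have h1q : ∀ n : ℕ, ‖q ^ (n + 1)‖ < 1 := fun n => by
    rw [norm_pow]; exact pow_lt_one₀ (norm_nonneg q) hq n.succ_ne_zero
  have hqne : ∀ n : ℕ, (1 : ℂ) - q ^ (n + 1) ≠ 0 := fun n => one_sub_ne _ (h1q n)
  -- the per-term algebraic identity
  have hterm : ∀ m : ℕ, EEterm x r w (m + 1) =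
      w ^ (m + 1) / ((m + 1 : ℕ) : ℂ) +
        (aa ^ (m + 1) - bb ^ (m + 1)) * (1 - q ^ (m + 1))⁻¹ / ((m + 1 : ℕ) : ℂ) := by
    intro m
    set P : ℂ := (xpow x r) ^ (m + 1) with hPdef
    set Q : ℂ := (xpow x 1) ^ (m + 1) with hQdef
    have hP : P ≠ 0 := pow_ne_zero _ (xpow_ne_zero x r)
    have hQ : Q ≠ 0 := pow_ne_zero _ (xpow_ne_zero x 1)
    have hqQQ : q ^ (m + 1) * (Q * Q) = P * P := by
      rw [hqdef, hPdef, hQdef, ← mul_pow, ← mul_pow, ← mul_pow]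
      congr 1
      rw [← xpow_add, ← xpow_add, ← xpow_add]
      congr 1
      ring
    have hd2 : (1 - q ^ (m + 1)) * (Q * Q) = Q * Q - P * P := by
      rw [sub_mul, one_mul, hqQQ]
    have e1 : xpow x (r * ((m + 1 : ℕ) : ℂ)) = P := by rw [hPdef, xpow_natmul]
    have e2 : xpow x (-r * ((m + 1 : ℕ) : ℂ)) = P⁻¹ := by
      rw [xpow_natmul, xpow_neg, inv_pow, hPdef]
    have e3 : xpow x (((m + 1 : ℕ) : ℂ)) = Q := by rw [hQdef, xpow_nat]
    have e4 : xpow x (-((m + 1 : ℕ) : ℂ)) = Q⁻¹ := by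
      rw [xpow_neg, xpow_nat, hQdef]
    have exr1 : xpow x (r - 1) = xpow x r * (xpow x 1)⁻¹ := by
      rw [show r - 1 = r + -1 by ring, xpow_add, xpow_neg]
    have e5 : xpow x ((r - 1) * ((m + 1 : ℕ) : ℂ)) = P * Q⁻¹ := by
      rw [xpow_natmul, exr1, mul_pow, inv_pow, hPdef, hQdef]
    have e6 : xpow x (-(r - 1) * ((m + 1 : ℕ) : ℂ)) = P⁻¹ * Q := by
      rw [xpow_natmul, show -(r-1) = -r + 1 by ring, xpow_add, xpow_neg, mul_pow, inv_pow,
        hPdef, hQdef]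
    have e7 : aa ^ (m + 1) = Q⁻¹ * Q⁻¹ * w ^ (m + 1) := by
      rw [hadef, mul_pow, show (-2 : ℂ) = -1 + -1 by norm_num, xpow_add, xpow_neg, mul_pow,
        inv_pow, hQdef]
    have e8 : bb ^ (m + 1) = P * P * w ^ (m + 1) := by
      rw [hbdef, mul_pow, show 2 * (r - 1) + 2 = r + r by ring, xpow_add, mul_pow, hPdef]
    rw [EEterm, e1, e2, e3, e4, e5, e6, e7, e8]
    exact ratio_eq P Q (w ^ (m + 1)) ((m + 1 : ℕ) : ℂ) (1 - q ^ (m + 1)) hP hQ (hqne m) hd2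
  clear_value q aa bb
  -- per-m geometric sum over k
  have hgeo : ∀ m : ℕ, HasSum
      (fun k : ℕ => ((aa * q ^ k) ^ (m + 1) - (bb * q ^ k) ^ (m + 1)) / ((m + 1 : ℕ) : ℂ))
      ((aa ^ (m + 1) - bb ^ (m + 1)) * (1 - q ^ (m + 1))⁻¹ / ((m + 1 : ℕ) : ℂ)) := by
    intro m
    have hg : HasSum (fun k : ℕ => (q ^ (m + 1)) ^ k) (1 - q ^ (m + 1))⁻¹ :=
      hasSum_geometric_of_norm_lt_one (h1q m)
    have h2 := hg.mul_left ((aa ^ (m + 1) - bb ^ (m + 1)) / ((m + 1 : ℕ) : ℂ))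
    have h3 : ∀ k : ℕ, (aa ^ (m + 1) - bb ^ (m + 1)) / ((m + 1 : ℕ) : ℂ) * (q ^ (m + 1)) ^ k
        = ((aa * q ^ k) ^ (m + 1) - (bb * q ^ k) ^ (m + 1)) / ((m + 1 : ℕ) : ℂ) := by
      intro k
      have : (q ^ (m + 1)) ^ k = (q ^ k) ^ (m + 1) := by
        rw [← pow_mul, ← pow_mul, Nat.mul_comm]
      rw [this, mul_pow, mul_pow]
      ring
    rw [show (aa ^ (m + 1) - bb ^ (m + 1)) * (1 - q ^ (m + 1))⁻¹ / ((m + 1 : ℕ) : ℂ)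
      = (aa ^ (m + 1) - bb ^ (m + 1)) / ((m + 1 : ℕ) : ℂ) * (1 - q ^ (m + 1))⁻¹ by ring]
    exact (funext h3) ▸ h2
  -- per-k log sum over m
  have hlog : ∀ k : ℕ, HasSum
      (fun m : ℕ => ((aa * q ^ k) ^ (m + 1) - (bb * q ^ k) ^ (m + 1)) / ((m + 1 : ℕ) : ℂ))
      (-Complex.log (1 - aa * q ^ k) - -Complex.log (1 - bb * q ^ k)) := by
    intro k
    have h1 := htaylor _ (haq k)
    have h2 := htaylor _ (hbq k)
    simpa [sub_div] using h1.sub h2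
  -- summability on the product
  set F : ℕ × ℕ → ℂ :=
    fun p => ((aa * q ^ p.2) ^ (p.1 + 1) - (bb * q ^ p.2) ^ (p.1 + 1)) / ((p.1 + 1 : ℕ) : ℂ)
    with hFdef
  have hsA : Summable (fun m : ℕ => ‖aa‖ ^ (m + 1)) := by
    simpa [pow_succ] using (summable_geometric_of_lt_one (norm_nonneg aa) ha).mul_right ‖aa‖
  have hsB : Summable (fun m : ℕ => ‖bb‖ ^ (m + 1)) := by
    simpa [pow_succ] using (summable_geometric_of_lt_one (norm_nonneg bb) hb).mul_right ‖bb‖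
  have hG : Summable (fun p : ℕ × ℕ => (‖aa‖ ^ (p.1 + 1) + ‖bb‖ ^ (p.1 + 1)) * ‖q‖ ^ p.2) :=
    Summable.mul_of_nonneg (hsA.add hsB) (summable_geometric_of_lt_one (norm_nonneg q) hq)
      (fun m => by positivity) (fun k => by positivity)
  have hFle : ∀ p : ℕ × ℕ, ‖F p‖ ≤ (‖aa‖ ^ (p.1 + 1) + ‖bb‖ ^ (p.1 + 1)) * ‖q‖ ^ p.2 := by
    rintro ⟨m, k⟩
    have hNc : ‖((m + 1 : ℕ) : ℂ)‖ = ((m + 1 : ℕ) : ℝ) := by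
      rw [Complex.norm_natCast]
    have hN1 : (1 : ℝ) ≤ ‖((m + 1 : ℕ) : ℂ)‖ := by
      rw [hNc]; exact_mod_cast Nat.succ_le_succ (Nat.zero_le m)
    have hqk : (‖q‖ ^ k) ^ (m + 1) ≤ ‖q‖ ^ k :=
      pow_le_of_le_one (by positivity) (pow_le_one₀ (norm_nonneg q) hq.le) m.succ_ne_zero
    have hnum : ‖(aa * q ^ k) ^ (m + 1) - (bb * q ^ k) ^ (m + 1)‖
        ≤ (‖aa‖ ^ (m + 1) + ‖bb‖ ^ (m + 1)) * ‖q‖ ^ k := by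
      refine (norm_sub_le _ _).trans ?_
      have h1 : ‖(aa * q ^ k) ^ (m + 1)‖ ≤ ‖aa‖ ^ (m + 1) * ‖q‖ ^ k := by
        calc ‖(aa * q ^ k) ^ (m + 1)‖ = ‖aa‖ ^ (m + 1) * (‖q‖ ^ k) ^ (m + 1) := by
              rw [norm_pow, norm_mul aa, norm_pow, mul_pow]
          _ ≤ ‖aa‖ ^ (m + 1) * ‖q‖ ^ k := by
              exact mul_le_mul_of_nonneg_left hqk (by positivity)
      have h2 : ‖(bb * q ^ k) ^ (m + 1)‖ ≤ ‖bb‖ ^ (m + 1) * ‖q‖ ^ k := by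
        calc ‖(bb * q ^ k) ^ (m + 1)‖ = ‖bb‖ ^ (m + 1) * (‖q‖ ^ k) ^ (m + 1) := by
              rw [norm_pow, norm_mul bb, norm_pow, mul_pow]
          _ ≤ ‖bb‖ ^ (m + 1) * ‖q‖ ^ k := by
              exact mul_le_mul_of_nonneg_left hqk (by positivity)
      calc ‖(aa * q ^ k) ^ (m + 1)‖ + ‖(bb * q ^ k) ^ (m + 1)‖
          ≤ ‖aa‖ ^ (m + 1) * ‖q‖ ^ k + ‖bb‖ ^ (m + 1) * ‖q‖ ^ k := add_le_add h1 h2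
        _ = (‖aa‖ ^ (m + 1) + ‖bb‖ ^ (m + 1)) * ‖q‖ ^ k := by ring
    calc ‖F (m, k)‖ = ‖(aa * q ^ k) ^ (m + 1) - (bb * q ^ k) ^ (m + 1)‖ / ‖((m + 1 : ℕ) : ℂ)‖ := by
          rw [hFdef]; exact norm_div _ _
      _ ≤ ‖(aa * q ^ k) ^ (m + 1) - (bb * q ^ k) ^ (m + 1)‖ / 1 := by gcongr
      _ = ‖(aa * q ^ k) ^ (m + 1) - (bb * q ^ k) ^ (m + 1)‖ := div_one _
      _ ≤ _ := hnum
  have hF : Summable F := Summable.of_norm_bounded hG hFle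
  -- double sums
  have hsum1 : HasSum
      (fun m : ℕ => (aa ^ (m + 1) - bb ^ (m + 1)) * (1 - q ^ (m + 1))⁻¹ / ((m + 1 : ℕ) : ℂ))
      (∑' p, F p) := hF.hasSum.prod_fiberwise hgeo
  have hFswap : HasSum (fun p : ℕ × ℕ => F (p.2, p.1)) (∑' p, F p) := by
    have h := (Equiv.prodComm ℕ ℕ).hasSum_iff.mpr hF.hasSum
    exact h
  have hsum2 : HasSum
      (fun k : ℕ => -Complex.log (1 - aa * q ^ k) - -Complex.log (1 - bb * q ^ k))
      (∑' p, F p) := hFswap.prod_fiberwise hlog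
  -- summability of the log series
  have hlogsum : ∀ z : ℂ, ‖z‖ < 1 → Summable (fun k : ℕ => Complex.log (1 - z * q ^ k)) := by
    intro z hz
    refine Summable.of_norm_bounded (g := (fun k => (‖z‖ ^ 2 * (1 - ‖z‖)⁻¹ / 2 + ‖z‖) * ‖q‖ ^ k))
      ((summable_geometric_of_lt_one (norm_nonneg q) hq).mul_left _) ?_
    intro k
    have ht : ‖z * q ^ k‖ = ‖z‖ * ‖q‖ ^ k := by rw [norm_mul, norm_pow]
    have htle : ‖z * q ^ k‖ ≤ ‖z‖ := by
      rw [ht]; exact mul_le_of_le_one_right (norm_nonneg z) (pow_le_one₀ (norm_nonneg q) hq.le)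
    have ht1 : ‖-(z * q ^ k)‖ < 1 := by rw [norm_neg]; exact lt_of_le_of_lt htle hz
    have hb1 := Complex.norm_log_one_add_le ht1
    rw [show (1 : ℂ) + -(z * q ^ k) = 1 - z * q ^ k by ring] at hb1
    rw [norm_neg] at hb1
    refine hb1.trans ?_
    have hinv : (1 - ‖z * q ^ k‖)⁻¹ ≤ (1 - ‖z‖)⁻¹ := by
      apply inv_anti₀ (by linarith) (by linarith)
    have hsq : ‖z * q ^ k‖ ^ 2 ≤ ‖z‖ ^ 2 * ‖q‖ ^ k := by
      rw [ht, mul_pow]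
      have : (‖q‖ ^ k) ^ 2 ≤ ‖q‖ ^ k :=
        pow_le_of_le_one (by positivity) (pow_le_one₀ (norm_nonneg q) hq.le) two_ne_zero
      nlinarith [norm_nonneg z]
    have h0 : (0:ℝ) < 1 - ‖z‖ := by linarith
    have hq0 : (0:ℝ) ≤ ‖q‖ ^ k := by positivity
    calc ‖z * q ^ k‖ ^ 2 * (1 - ‖z * q ^ k‖)⁻¹ / 2 + ‖z * q ^ k‖
        ≤ (‖z‖ ^ 2 * ‖q‖ ^ k) * (1 - ‖z‖)⁻¹ / 2 + ‖z‖ * ‖q‖ ^ k := by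
          have h1 : ‖z * q ^ k‖ ^ 2 * (1 - ‖z * q ^ k‖)⁻¹ ≤ (‖z‖ ^ 2 * ‖q‖ ^ k) * (1 - ‖z‖)⁻¹ := by
            apply mul_le_mul hsq hinv (inv_nonneg.mpr (by linarith)) (by positivity)
          linarith [ht.le, ht.ge]
      _ = (‖z‖ ^ 2 * (1 - ‖z‖)⁻¹ / 2 + ‖z‖) * ‖q‖ ^ k := by ring
  have hla : Summable (fun k : ℕ => Complex.log (1 - aa * q ^ k)) := hlogsum aa ha
  have hlb : Summable (fun k : ℕ => Complex.log (1 - bb * q ^ k)) := hlogsum bb hb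
  have hT : (∑' p, F p) =
      -(∑' k : ℕ, Complex.log (1 - aa * q ^ k)) - -(∑' k : ℕ, Complex.log (1 - bb * q ^ k)) :=
    hsum2.unique (hla.hasSum.neg.sub hlb.hasSum.neg)
  have hW : HasSum (fun m : ℕ => w ^ (m + 1) / ((m + 1 : ℕ) : ℂ)) (-Complex.log (1 - w)) :=
    htaylor w hw
  have hEE : HasSum (fun m : ℕ => EEterm x r w (m + 1))
      (-Complex.log (1 - w) + ∑' p, F p) := by
    have h := hW.add hsum1
    have heq : (fun m : ℕ => w ^ (m + 1) / ((m + 1 : ℕ) : ℂ) +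
        (aa ^ (m + 1) - bb ^ (m + 1)) * (1 - q ^ (m + 1))⁻¹ / ((m + 1 : ℕ) : ℂ))
        = fun m : ℕ => EEterm x r w (m + 1) := funext fun m => (hterm m).symm
    rwa [heq] at h
  constructor
  · -- summability of norms
    have hqpos : (0:ℝ) < 1 - ‖q‖ := by linarith
    have hbnd : ∀ m : ℕ, ‖EEterm x r w (m + 1)‖
        ≤ ‖w‖ ^ (m + 1) + (‖aa‖ ^ (m + 1) + ‖bb‖ ^ (m + 1)) * (1 - ‖q‖)⁻¹ := by
      intro m
      rw [hterm m]
      refine (norm_add_le _ _).trans (add_le_add ?_ ?_)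
      · rw [norm_div, Complex.norm_natCast, norm_pow]
        apply div_le_self (by positivity)
        exact_mod_cast Nat.succ_le_succ (Nat.zero_le m)
      · have hden : 1 - ‖q‖ ≤ ‖1 - q ^ (m + 1)‖ := by
          have h3 : ‖q ^ (m + 1)‖ ≤ ‖q‖ := by
            rw [norm_pow]
            exact pow_le_of_le_one (norm_nonneg q) hq.le m.succ_ne_zero
          have h4 := norm_sub_norm_le (1 : ℂ) (q ^ (m + 1))
          rw [norm_one] at h4
          linarith
        have hnum : ‖aa ^ (m + 1) - bb ^ (m + 1)‖ ≤ ‖aa‖ ^ (m + 1) + ‖bb‖ ^ (m + 1) := by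
          refine (norm_sub_le _ _).trans ?_
          rw [norm_pow, norm_pow]
        have hNc : (1:ℝ) ≤ ‖((m + 1 : ℕ) : ℂ)‖ := by
          rw [Complex.norm_natCast]; exact_mod_cast Nat.succ_le_succ (Nat.zero_le m)
        rw [norm_div, norm_mul, norm_inv]
        calc ‖aa ^ (m + 1) - bb ^ (m + 1)‖ * ‖1 - q ^ (m + 1)‖⁻¹ / ‖((m + 1 : ℕ) : ℂ)‖
            ≤ ‖aa ^ (m + 1) - bb ^ (m + 1)‖ * ‖1 - q ^ (m + 1)‖⁻¹ / 1 := by gcongr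
          _ = ‖aa ^ (m + 1) - bb ^ (m + 1)‖ * ‖1 - q ^ (m + 1)‖⁻¹ := div_one _
          _ ≤ (‖aa‖ ^ (m + 1) + ‖bb‖ ^ (m + 1)) * (1 - ‖q‖)⁻¹ := by
              apply mul_le_mul hnum (inv_anti₀ hqpos hden)
                (inv_nonneg.mpr (norm_nonneg _)) (by positivity)
    refine Summable.of_nonneg_of_le (fun m => norm_nonneg _) hbnd ?_
    have hsW : Summable (fun m : ℕ => ‖w‖ ^ (m + 1)) := by
      simpa [pow_succ] using (summable_geometric_of_lt_one (norm_nonneg w) hw).mul_right ‖w‖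
    exact hsW.add ((hsA.add hsB).mul_right _)
  · -- the product formula
    rw [hEE.tsum_eq, hT]
    have h1w : (1:ℂ) - w ≠ 0 := one_sub_ne w hw
    have hprod : ∀ z : ℂ, (∀ k : ℕ, (1:ℂ) - z * q ^ k ≠ 0) →
        Summable (fun k : ℕ => Complex.log (1 - z * q ^ k)) →
        Complex.exp (∑' k : ℕ, Complex.log (1 - z * q ^ k)) = ∏' k : ℕ, (1 - z * q ^ k) := by
      intro z hne hs
      have h := hs.hasSum.cexp
      have h2 : (cexp ∘ fun k : ℕ => Complex.log (1 - z * q ^ k)) = fun k : ℕ => 1 - z * q ^ k :=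
        funext fun k => Complex.exp_log (hne k)
      rw [h2] at h
      exact h.tprod_eq.symm
    have hnea : ∀ k : ℕ, (1:ℂ) - aa * q ^ k ≠ 0 := fun k => one_sub_ne _ (haq k)
    have hneb : ∀ k : ℕ, (1:ℂ) - bb * q ^ k ≠ 0 := fun k => one_sub_ne _ (hbq k)
    have hPa := hprod aa hnea hla
    have hPb := hprod bb hneb hlb
    rw [show -(-Complex.log (1 - w) +
        (-(∑' k : ℕ, Complex.log (1 - aa * q ^ k)) - -(∑' k : ℕ, Complex.log (1 - bb * q ^ k))))
      = Complex.log (1 - w) + ((∑' k : ℕ, Complex.log (1 - aa * q ^ k)) +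
        -(∑' k : ℕ, Complex.log (1 - bb * q ^ k))) by ring,
      Complex.exp_add, Complex.exp_add, Complex.exp_neg, Complex.exp_log h1w, hPa, hPb]
    have hqp1 : ∏' k : ℕ, (1 - aa * q ^ k) = qPoch aa q := by
      rw [qPoch]; exact tprod_congr fun k => by ring
    have hqp2 : ∏' k : ℕ, (1 - bb * q ^ k) = qPoch bb q := by
      rw [qPoch]; exact tprod_congr fun k => by ring
    rw [hqp1, hqp2, div_eq_mul_inv, mul_assoc]
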